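/- There exists a constant C > 0 such that for all n: (a) for λ_{j,n} = λ_{k,n} ∈ {0, π}, |S3(λ_{j,n}, λ_{k,n}) − f1(λ_{j,n}) f2(λ_{j,n})| ≤ C/n; (b) in all other cases of Fourier frequencies λ_{j,n}, λ_{k,n} ∈ [0,π] (i.e. λ_{j,n} = λ_{k,n} ∉ {0,π} or λ_{j,n} ≠ λ_{k,n}), |S3(λ_{j,n}, λ_{k,n})| ≤ C/n². -/

import Mathlib

open Complex Finset
open scoped Real

/-- The spectral density `f(λ) = (2π)^{-1} Σ_{h∈ℤ} γ(h) e^{−ihλ}` of an absolutely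
summable autocovariance function `γ : ℤ → ℂ`. -/
noncomputable def specDens (γ : ℤ → ℂ) (l : ℝ) : ℂ :=
  (2 * π : ℂ)⁻¹ * ∑' h : ℤ, γ h * Complex.exp (-Complex.I * (h : ℂ) * (l : ℂ))

/-- `S3(λ,μ) = (1/(4π²n²)) Σ_{t1,t2,t3,t4=1}^{n} γ1(t1−t4) γ2(t2−t3)
e^{−i(t1−t2)λ + i(t3−t4)μ}`. -/
noncomputable def S3sum (γ1 γ2 : ℤ → ℂ) (n : ℕ) (l μ : ℝ) : ℂ :=
  (1 / (4 * (π : ℂ) ^ 2 * (n : ℂ) ^ 2)) *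
    ∑ t1 ∈ Finset.Icc (1 : ℤ) n, ∑ t2 ∈ Finset.Icc (1 : ℤ) n,
      ∑ t3 ∈ Finset.Icc (1 : ℤ) n, ∑ t4 ∈ Finset.Icc (1 : ℤ) n,
        γ1 (t1 - t4) * γ2 (t2 - t3) *
          Complex.exp (-Complex.I * ((t1 : ℂ) - (t2 : ℂ)) * (l : ℂ) +
            Complex.I * ((t3 : ℂ) - (t4 : ℂ)) * (μ : ℂ))

/- ### Auxiliary definitions and lemmas -/

noncomputable def Asum (γ : ℤ → ℂ) (n : ℕ) (a b : ℝ) : ℂ :=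
  ∑ s ∈ Icc (1:ℤ) (n:ℤ), ∑ t ∈ Icc (1:ℤ) (n:ℤ),
    γ (s - t) * Complex.exp (Complex.I * a * s + Complex.I * b * t)

noncomputable def cnt (n : ℕ) (h : ℤ) : ℕ := (Icc (max 1 (1 - h)) (min (n:ℤ) ((n:ℤ) - h))).card

lemma cnt_le (n : ℕ) (h : ℤ) : cnt n h ≤ n := by
  unfold cnt; rw [Int.card_Icc]; omega

lemma cnt_zero (n : ℕ) (h : ℤ) (hh : h ∉ Icc (1-(n:ℤ)) ((n:ℤ)-1)) : cnt n h = 0 := by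
  simp only [mem_Icc, not_and_or, not_le] at hh
  unfold cnt; rw [Int.card_Icc]; omega

lemma n_le_cnt_add (n : ℕ) (h : ℤ) : n ≤ cnt n h + h.natAbs := by
  unfold cnt; rw [Int.card_Icc]; omega

lemma Icc_cnt_subset (n : ℕ) (h : ℤ) :
    Icc (max 1 (1 - h)) (min (n:ℤ) ((n:ℤ) - h)) ⊆ Icc (1:ℤ) (n:ℤ) :=
  Icc_subset_Icc (le_max_left _ _) (min_le_left _ _)

lemma card_sdiff_cnt (n : ℕ) (h : ℤ) :
    ((Icc (1:ℤ) (n:ℤ)) \ Icc (max 1 (1 - h)) (min (n:ℤ) ((n:ℤ) - h))).card ≤ h.natAbs := by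
  rw [card_sdiff_of_subset (Icc_cnt_subset n h), Int.card_Icc, Int.card_Icc]
  omega

lemma natAbs_le_one_add (h : ℤ) : (h.natAbs : ℝ) ≤ 1 + (|h| : ℤ) := by
  rw [Nat.cast_natAbs, Int.cast_abs]; linarith [abs_nonneg ((h:ℝ))]

lemma summable_of_weighted {γ : ℤ → ℂ} (hγ : Summable fun h : ℤ => (1 + |h| : ℝ) * ‖γ h‖) :
    Summable fun h : ℤ => ‖γ h‖ := by
  refine Summable.of_nonneg_of_le (fun b => norm_nonneg _) (fun b => ?_) hγ
  have h0 : (0:ℝ) ≤ ((|b| : ℤ) : ℝ) := by exact_mod_cast abs_nonneg b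
  nlinarith [norm_nonneg (γ b)]

lemma Asum_eq (γ : ℤ → ℂ) (n : ℕ) (a b : ℝ) :
    Asum γ n a b = ∑ h ∈ Icc (1-(n:ℤ)) ((n:ℤ)-1),
      γ h * Complex.exp (Complex.I * a * h) *
      ∑ t ∈ Icc (max 1 (1 - h)) (min (n:ℤ) ((n:ℤ) - h)),
        Complex.exp (Complex.I * ((a:ℂ) + (b:ℂ))) ^ t := by
  unfold Asum
  rw [Finset.sum_comm]
  have step1 : ∀ t ∈ Icc (1:ℤ) (n:ℤ),
      (∑ s ∈ Icc (1:ℤ) (n:ℤ), γ (s - t) * Complex.exp (Complex.I * a * s + Complex.I * b * t))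
      = ∑ h ∈ Icc (1-t) ((n:ℤ)-t), γ h * Complex.exp (Complex.I * a * (t+h) + Complex.I * b * t) := by
    intro t _
    have : Icc (1:ℤ) (n:ℤ) = Finset.map (addLeftEmbedding t) (Icc (1-t) ((n:ℤ)-t)) := by
      rw [Finset.map_add_left_Icc]; congr 1 <;> ring
    rw [this, Finset.sum_map]
    refine Finset.sum_congr rfl fun h _ => ?_
    simp only [addLeftEmbedding_apply]
    congr 2
    · ring
    · push_cast; ring
  rw [Finset.sum_congr rfl step1]
  have step2 : ∀ t ∈ Icc (1:ℤ) (n:ℤ),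
      (∑ h ∈ Icc (1-t) ((n:ℤ)-t), γ h * Complex.exp (Complex.I * a * (t+h) + Complex.I * b * t))
      = ∑ h ∈ Icc (1-(n:ℤ)) ((n:ℤ)-1), (if h ∈ Icc (1-t) ((n:ℤ)-t)
          then γ h * Complex.exp (Complex.I * a * (t+h) + Complex.I * b * t) else 0) := by
    intro t ht
    rw [Finset.sum_ite_mem]
    congr 1
    simp only [mem_Icc] at ht
    exact (Finset.inter_eq_right.2 (Icc_subset_Icc (by omega) (by omega))).symm
  rw [Finset.sum_congr rfl step2, Finset.sum_comm]
  refine Finset.sum_congr rfl fun h hh => ?_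
  have step3 : ∀ t ∈ Icc (1:ℤ) (n:ℤ),
      (if h ∈ Icc (1-t) ((n:ℤ)-t)
          then γ h * Complex.exp (Complex.I * a * (t+h) + Complex.I * b * t) else 0)
      = (if t ∈ Icc (max 1 (1-h)) (min (n:ℤ) ((n:ℤ)-h))
          then γ h * Complex.exp (Complex.I * a * (t+h) + Complex.I * b * t) else 0) := by
    intro t ht
    simp only [mem_Icc] at ht ⊢
    congr 1
    simp only [le_min_iff, max_le_iff, eq_iff_iff]
    omega
  rw [Finset.sum_congr rfl step3, Finset.sum_ite_mem, Finset.inter_eq_right.2 (Icc_cnt_subset n h),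
    Finset.mul_sum]
  refine Finset.sum_congr rfl fun t _ => ?_
  have he : Complex.exp (Complex.I * a * (t+h) + Complex.I * b * t)
      = Complex.exp (Complex.I * a * h) * Complex.exp (Complex.I * ((a:ℂ) + (b:ℂ))) ^ t := by
    rw [← Complex.exp_int_mul, ← Complex.exp_add]
    congr 1
    ring
  rw [he]
  exact (mul_assoc _ _ _).symm

lemma geom_Icc (z : ℂ) (hz : z ≠ 1) (n : ℕ) (hzn : z ^ n = 1) :
    ∑ t ∈ Icc (1:ℤ) (n:ℤ), z ^ t = 0 := by
  rcases Nat.eq_zero_or_pos n with h0 | hn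
  · subst h0; simp
  have hz0 : z ≠ 0 := by
    intro h; rw [h, zero_pow (by omega)] at hzn; exact one_ne_zero hzn.symm
  have key : ∑ t ∈ Icc (1:ℤ) (n:ℤ), z ^ t = ∑ i ∈ Finset.range n, z ^ ((i:ℤ) + 1) := by
    refine Finset.sum_nbij' (fun t => (t - 1).toNat) (fun i => (i : ℤ) + 1) ?_ ?_ ?_ ?_ ?_
    · intro t ht; simp only [mem_Icc] at ht; simp only [Finset.mem_range]
      show ((t - 1).toNat) < n; omega
    · intro i hi; simp only [Finset.mem_range] at hi; simp only [mem_Icc]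
      show (1:ℤ) ≤ (i:ℤ) + 1 ∧ (i:ℤ) + 1 ≤ (n:ℤ); omega
    · intro t ht; simp only [mem_Icc] at ht
      show ((((t - 1).toNat : ℕ) : ℤ) + 1) = t; omega
    · intro i _
      show ((((i:ℤ) + 1) - 1).toNat) = i; omega
    · intro t ht; simp only [mem_Icc] at ht
      show z ^ t = z ^ ((((t - 1).toNat) : ℤ) + 1); congr 1; omega
  have key2 : ∀ i ∈ Finset.range n, z ^ ((i:ℤ) + 1) = z ^ i * z := by
    intro i _
    rw [zpow_add₀ hz0, zpow_natCast, zpow_one]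
  rw [key, Finset.sum_congr rfl key2, ← Finset.sum_mul, geom_sum_eq hz, hzn, sub_self,
    div_eq_mul_inv, zero_mul, zero_mul]

lemma keyA (γ : ℤ → ℂ) (hγ : Summable fun h : ℤ => (1 + |h| : ℝ) * ‖γ h‖)
    (e : ℤ → ℂ) (he : ∀ h, ‖e h‖ = 1) (n : ℕ) (hn : 0 < n) :
    ‖(∑ h ∈ Icc (1-(n:ℤ)) ((n:ℤ)-1), γ h * e h * (cnt n h : ℂ)) / n - ∑' h : ℤ, γ h * e h‖
      ≤ (∑' h : ℤ, (1 + |h| : ℝ) * ‖γ h‖) / n := by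
  have hnR : (0:ℝ) < n := by exact_mod_cast hn
  have hnorm : ∀ h : ℤ, ‖γ h * e h‖ = ‖γ h‖ := fun h => by rw [norm_mul, he, mul_one]
  have hsumm : Summable fun h : ℤ => γ h * e h := by
    refine Summable.of_norm ?_
    simpa only [hnorm] using summable_of_weighted hγ
  have hout : ∀ h ∉ Icc (1-(n:ℤ)) ((n:ℤ)-1), γ h * e h * ((cnt n h : ℂ) / n) = 0 := by
    intro h hh; rw [cnt_zero n h hh]; simp
  have hsumm2 : Summable fun h : ℤ => γ h * e h * ((cnt n h : ℂ) / n) :=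
    summable_of_ne_finset_zero hout
  have hfin : (∑ h ∈ Icc (1-(n:ℤ)) ((n:ℤ)-1), γ h * e h * (cnt n h : ℂ)) / n
      = ∑' h : ℤ, γ h * e h * ((cnt n h : ℂ) / n) := by
    rw [tsum_eq_sum hout, Finset.sum_div]
    exact Finset.sum_congr rfl fun h _ => by ring
  rw [hfin, ← Summable.tsum_sub hsumm2 hsumm]
  have hpt : ∀ h : ℤ, ‖γ h * e h * ((cnt n h : ℂ) / n) - γ h * e h‖
      ≤ ((1 + |h| : ℝ) * ‖γ h‖) / n := by
    intro h
    have hfac : γ h * e h * ((cnt n h : ℂ) / n) - γ h * e h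
        = γ h * e h * ((cnt n h : ℂ) / n - 1) := by ring
    rw [hfac, norm_mul, hnorm]
    have hcast : ((cnt n h : ℂ) / n - 1) = (((cnt n h : ℝ) / n - 1 : ℝ) : ℂ) := by push_cast; ring
    rw [hcast, Complex.norm_real]
    have hc1 : (cnt n h : ℝ) ≤ n := by exact_mod_cast cnt_le n h
    have hc2 : (n : ℝ) ≤ cnt n h + h.natAbs := by exact_mod_cast n_le_cnt_add n h
    have hd1 : (cnt n h : ℝ) / n ≤ 1 := (div_le_one hnR).2 hc1
    have habs : |(cnt n h : ℝ) / n - 1| ≤ (h.natAbs : ℝ) / n := by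
      rw [abs_of_nonpos (by linarith), neg_sub, le_div_iff₀ hnR]
      have : (1 - (cnt n h : ℝ) / n) * n = n - cnt n h := by field_simp
      rw [this]; linarith
    calc ‖γ h‖ * |(cnt n h : ℝ) / n - 1| ≤ ‖γ h‖ * ((h.natAbs : ℝ) / n) :=
          mul_le_mul_of_nonneg_left habs (norm_nonneg _)
      _ ≤ ((1 + |h| : ℝ) * ‖γ h‖) / n := by
          rw [mul_div_assoc']
          refine div_le_div_of_nonneg_right ?_ hnR.le
          nlinarith [natAbs_le_one_add h, norm_nonneg (γ h), Nat.cast_nonneg (α := ℝ) h.natAbs]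
  have hsumG : Summable fun h : ℤ => ((1 + |h| : ℝ) * ‖γ h‖) / n := hγ.div_const n
  have hsumFnorm : Summable fun h : ℤ => ‖γ h * e h * ((cnt n h : ℂ) / n) - γ h * e h‖ :=
    Summable.of_nonneg_of_le (fun b => norm_nonneg _) hpt hsumG
  calc ‖∑' h : ℤ, (γ h * e h * ((cnt n h : ℂ) / n) - γ h * e h)‖
      ≤ ∑' h : ℤ, ‖γ h * e h * ((cnt n h : ℂ) / n) - γ h * e h‖ :=
        norm_tsum_le_tsum_norm hsumFnorm
    _ ≤ ∑' h : ℤ, ((1 + |h| : ℝ) * ‖γ h‖) / n := Summable.tsum_le_tsum hpt hsumFnorm hsumG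
    _ = (∑' h : ℤ, (1 + |h| : ℝ) * ‖γ h‖) / n := tsum_div_const

lemma boundTsum (γ : ℤ → ℂ) (hγ : Summable fun h : ℤ => (1 + |h| : ℝ) * ‖γ h‖)
    (e : ℤ → ℂ) (he : ∀ h, ‖e h‖ = 1) :
    ‖∑' h : ℤ, γ h * e h‖ ≤ ∑' h : ℤ, (1 + |h| : ℝ) * ‖γ h‖ := by
  have hnorm : ∀ h : ℤ, ‖γ h * e h‖ = ‖γ h‖ := fun h => by rw [norm_mul, he, mul_one]
  have hs : Summable fun h : ℤ => ‖γ h * e h‖ := by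
    simpa only [hnorm] using summable_of_weighted hγ
  calc ‖∑' h : ℤ, γ h * e h‖ ≤ ∑' h : ℤ, ‖γ h * e h‖ := norm_tsum_le_tsum_norm hs
    _ ≤ ∑' h : ℤ, (1 + |h| : ℝ) * ‖γ h‖ := by
        refine Summable.tsum_le_tsum (fun h => ?_) hs hγ
        rw [hnorm]
        have h0 : (0:ℝ) ≤ ((|h| : ℤ) : ℝ) := by exact_mod_cast abs_nonneg h
        nlinarith [norm_nonneg (γ h)]

lemma boundFin (γ : ℤ → ℂ) (hγ : Summable fun h : ℤ => (1 + |h| : ℝ) * ‖γ h‖)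
    (e : ℤ → ℂ) (he : ∀ h, ‖e h‖ = 1) (n : ℕ) (hn : 0 < n) :
    ‖(∑ h ∈ Icc (1-(n:ℤ)) ((n:ℤ)-1), γ h * e h * (cnt n h : ℂ)) / n‖
      ≤ ∑' h : ℤ, (1 + |h| : ℝ) * ‖γ h‖ := by
  have hnR : (0:ℝ) < n := by exact_mod_cast hn
  have hnorm : ∀ h : ℤ, ‖γ h * e h‖ = ‖γ h‖ := fun h => by rw [norm_mul, he, mul_one]
  have hbound : ‖∑ h ∈ Icc (1-(n:ℤ)) ((n:ℤ)-1), γ h * e h * (cnt n h : ℂ)‖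
      ≤ (∑' h : ℤ, (1 + |h| : ℝ) * ‖γ h‖) * n := by
    calc ‖∑ h ∈ Icc (1-(n:ℤ)) ((n:ℤ)-1), γ h * e h * (cnt n h : ℂ)‖
        ≤ ∑ h ∈ Icc (1-(n:ℤ)) ((n:ℤ)-1), ‖γ h * e h * (cnt n h : ℂ)‖ := norm_sum_le _ _
      _ ≤ ∑ h ∈ Icc (1-(n:ℤ)) ((n:ℤ)-1), ((1 + |h| : ℝ) * ‖γ h‖) * n := by
          refine Finset.sum_le_sum fun h _ => ?_
          rw [norm_mul, hnorm]
          have h0 : (0:ℝ) ≤ ((|h| : ℤ) : ℝ) := by exact_mod_cast abs_nonneg h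
          have hc : ‖((cnt n h : ℕ) : ℂ)‖ = (cnt n h : ℝ) := by
            rw [Complex.norm_natCast]
          rw [hc]
          have hc1 : (cnt n h : ℝ) ≤ n := by exact_mod_cast cnt_le n h
          calc ‖γ h‖ * (cnt n h : ℝ) ≤ ‖γ h‖ * n := mul_le_mul_of_nonneg_left hc1 (norm_nonneg _)
            _ ≤ (1 + |h| : ℝ) * ‖γ h‖ * n := by
                nlinarith [mul_nonneg (mul_nonneg h0 (norm_nonneg (γ h))) hnR.le]
      _ = (∑ h ∈ Icc (1-(n:ℤ)) ((n:ℤ)-1), (1 + |h| : ℝ) * ‖γ h‖) * n := by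
          rw [Finset.sum_mul]
      _ ≤ (∑' h : ℤ, (1 + |h| : ℝ) * ‖γ h‖) * n := by
          refine mul_le_mul_of_nonneg_right ?_ hnR.le
          refine Summable.sum_le_tsum _ (fun h _ => ?_) hγ
          have h0 : (0:ℝ) ≤ ((|h| : ℤ) : ℝ) := by exact_mod_cast abs_nonneg h
          positivity
  rw [norm_div, Complex.norm_natCast, div_le_iff₀ hnR]
  exact hbound

lemma keyB (γ : ℤ → ℂ) (hγ : Summable fun h : ℤ => (1 + |h| : ℝ) * ‖γ h‖)
    (e : ℤ → ℂ) (he : ∀ h, ‖e h‖ = 1) (n : ℕ) (D : ℤ → ℂ)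
    (hD : ∀ h, ‖D h‖ ≤ (h.natAbs : ℝ)) :
    ‖∑ h ∈ Icc (1-(n:ℤ)) ((n:ℤ)-1), γ h * e h * D h‖
      ≤ ∑' h : ℤ, (1 + |h| : ℝ) * ‖γ h‖ := by
  have hnorm : ∀ h : ℤ, ‖γ h * e h‖ = ‖γ h‖ := fun h => by rw [norm_mul, he, mul_one]
  calc ‖∑ h ∈ Icc (1-(n:ℤ)) ((n:ℤ)-1), γ h * e h * D h‖
      ≤ ∑ h ∈ Icc (1-(n:ℤ)) ((n:ℤ)-1), ‖γ h * e h * D h‖ := norm_sum_le _ _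
    _ ≤ ∑ h ∈ Icc (1-(n:ℤ)) ((n:ℤ)-1), (1 + |h| : ℝ) * ‖γ h‖ := by
        refine Finset.sum_le_sum fun h _ => ?_
        rw [norm_mul, hnorm]
        have hd := hD h
        have h2 := natAbs_le_one_add h
        nlinarith [norm_nonneg (γ h), norm_nonneg (D h), Nat.cast_nonneg (α := ℝ) h.natAbs]
    _ ≤ ∑' h : ℤ, (1 + |h| : ℝ) * ‖γ h‖ := by
        refine Summable.sum_le_tsum _ (fun h _ => ?_) hγ
        have h0 : (0:ℝ) ≤ ((|h| : ℤ) : ℝ) := by exact_mod_cast abs_nonneg h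
        positivity

lemma Dbound (z : ℂ) (hz1 : z ≠ 1) (n : ℕ) (hzn : z ^ n = 1) (hznorm : ‖z‖ = 1) (h : ℤ) :
    ‖∑ t ∈ Icc (max 1 (1-h)) (min (n:ℤ) ((n:ℤ)-h)), z ^ t‖ ≤ (h.natAbs : ℝ) := by
  have h0 := geom_Icc z hz1 n hzn
  have hsplit : (∑ t ∈ (Icc (1:ℤ) (n:ℤ)) \ Icc (max 1 (1-h)) (min (n:ℤ) ((n:ℤ)-h)), z ^ t)
      + ∑ t ∈ Icc (max 1 (1-h)) (min (n:ℤ) ((n:ℤ)-h)), z ^ t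
      = ∑ t ∈ Icc (1:ℤ) (n:ℤ), z ^ t := Finset.sum_sdiff (Icc_cnt_subset n h)
  have hneg : ∑ t ∈ Icc (max 1 (1-h)) (min (n:ℤ) ((n:ℤ)-h)), z ^ t
      = -∑ t ∈ (Icc (1:ℤ) (n:ℤ)) \ Icc (max 1 (1-h)) (min (n:ℤ) ((n:ℤ)-h)), z ^ t := by
    linear_combination hsplit + h0
  rw [hneg, norm_neg]
  calc ‖∑ t ∈ (Icc (1:ℤ) (n:ℤ)) \ Icc (max 1 (1-h)) (min (n:ℤ) ((n:ℤ)-h)), z ^ t‖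
      ≤ ∑ t ∈ (Icc (1:ℤ) (n:ℤ)) \ Icc (max 1 (1-h)) (min (n:ℤ) ((n:ℤ)-h)), ‖z ^ t‖ :=
        norm_sum_le _ _
    _ = ∑ t ∈ (Icc (1:ℤ) (n:ℤ)) \ Icc (max 1 (1-h)) (min (n:ℤ) ((n:ℤ)-h)), (1:ℝ) := by
        refine Finset.sum_congr rfl fun t _ => ?_
        rw [norm_zpow, hznorm, one_zpow]
    _ = (((Icc (1:ℤ) (n:ℤ)) \ Icc (max 1 (1-h)) (min (n:ℤ) ((n:ℤ)-h))).card : ℝ) := by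
        rw [Finset.sum_const, nsmul_eq_mul, mul_one]
    _ ≤ (h.natAbs : ℝ) := by exact_mod_cast card_sdiff_cnt n h

lemma Asum_case1 (γ : ℤ → ℂ) (n : ℕ) (a b : ℝ)
    (hz : Complex.exp (Complex.I * ((a:ℂ) + (b:ℂ))) = 1) :
    Asum γ n a b = ∑ h ∈ Icc (1-(n:ℤ)) ((n:ℤ)-1),
      γ h * Complex.exp (Complex.I * a * h) * (cnt n h : ℂ) := by
  rw [Asum_eq]
  refine Finset.sum_congr rfl fun h _ => ?_
  rw [hz]
  simp [cnt]

lemma exp_ne_one_of (θ : ℝ) (N : ℕ) (r : ℤ) (hθ : (N:ℝ) * θ = 2 * π * r)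
    (hr : ∀ m : ℤ, r ≠ m * N) : Complex.exp (Complex.I * (θ:ℂ)) ≠ 1 := by
  intro hc
  rw [Complex.exp_eq_one_iff] at hc
  obtain ⟨m, hm⟩ := hc
  have hθm : (θ:ℂ) = ((2 * π * m : ℝ) : ℂ) := by
    refine mul_left_cancel₀ Complex.I_ne_zero ?_
    rw [hm]; push_cast; ring
  have hθr : θ = 2 * π * m := by exact_mod_cast hθm
  rw [hθr] at hθ
  have hpi : (π:ℝ) ≠ 0 := Real.pi_ne_zero
  have hrm : (r : ℝ) = (m : ℝ) * N := by
    have h2 : 2 * π * ((m:ℝ) * N) = 2 * π * (r:ℝ) := by linarith [hθ]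
    have := mul_left_cancel₀ (show (2:ℝ) * π ≠ 0 by positivity) h2
    linarith
  have : r = m * N := by exact_mod_cast hrm
  exact hr m this

lemma exp_pow_eq_one (θ : ℝ) (N : ℕ) (r : ℤ) (hθ : (N:ℝ) * θ = 2 * π * r) :
    Complex.exp (Complex.I * (θ:ℂ)) ^ N = 1 := by
  rw [← Complex.exp_nat_mul]
  have key : (N:ℂ) * (Complex.I * θ) = (r:ℂ) * (2 * (π:ℂ) * Complex.I) := by
    calc (N:ℂ) * (Complex.I * θ) = Complex.I * (((N:ℝ) * θ : ℝ):ℂ) := by push_cast; ring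
      _ = Complex.I * ((2*π*(r:ℝ) : ℝ):ℂ) := by rw [hθ]
      _ = (r:ℂ) * (2 * (π:ℂ) * Complex.I) := by push_cast; ring
  rw [key]
  exact_mod_cast Complex.exp_int_mul_two_pi_mul_I r

lemma norm_exp_I_real (x : ℂ) (hx : ∃ r : ℝ, x = Complex.I * (r:ℂ)) : ‖Complex.exp x‖ = 1 := by
  obtain ⟨r, rfl⟩ := hx
  rw [mul_comm, Complex.norm_exp_ofReal_mul_I]

lemma S3_factor (γ1 γ2 : ℤ → ℂ) (n : ℕ) (l μ : ℝ) :
    S3sum γ1 γ2 n l μ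
      = (1 / (4 * (π:ℂ)^2 * (n:ℂ)^2)) * (Asum γ1 n (-l) (-μ) * Asum γ2 n l μ) := by
  unfold S3sum Asum
  congr 1
  rw [Finset.sum_mul_sum]
  refine Finset.sum_congr rfl fun t1 _ => ?_
  refine Finset.sum_congr rfl fun t2 _ => ?_
  rw [Finset.sum_mul_sum]
  rw [Finset.sum_comm]
  refine Finset.sum_congr rfl fun t4 _ => ?_
  refine Finset.sum_congr rfl fun t3 _ => ?_
  have hexp : Complex.exp (-Complex.I * ((t1:ℂ) - (t2:ℂ)) * (l:ℂ) + Complex.I * ((t3:ℂ) - (t4:ℂ)) * (μ:ℂ))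
      = Complex.exp (Complex.I * ((-l:ℝ):ℂ) * (t1:ℂ) + Complex.I * ((-μ:ℝ):ℂ) * (t4:ℂ))
        * Complex.exp (Complex.I * (l:ℂ) * (t2:ℂ) + Complex.I * (μ:ℂ) * (t3:ℂ)) := by
    rw [← Complex.exp_add]
    congr 1
    push_cast
    ring
  rw [hexp]
  ring

lemma no_multiple (r N : ℤ) (h1 : 0 < r) (h2 : r < N) (m : ℤ) : r ≠ m * N := by
  intro heq
  rcases lt_trichotomy m 0 with h | h | h
  · nlinarith
  · subst h; simp at heq; omega
  · nlinarith

lemma tsum_weight_nonneg (γ : ℤ → ℂ) : (0:ℝ) ≤ ∑' h : ℤ, (1 + |h| : ℝ) * ‖γ h‖ := by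
  refine tsum_nonneg fun h => ?_
  have h0 : (0:ℝ) ≤ ((|h| : ℤ) : ℝ) := by exact_mod_cast abs_nonneg h
  positivity

/-- there is a constant `C > 0` such that for all `n`:
(a) for Fourier frequencies `λ_{j,n} = λ_{k,n} ∈ {0,π}` (i.e. `j = k` with `j = 0` or
`2j = n`), `|S3(λ_{j,n},λ_{k,n}) − f1(λ_{j,n}) f2(λ_{j,n})| ≤ C/n`;
(b) in all other cases of Fourier frequencies `λ_{j,n}, λ_{k,n} ∈ [0,π]`
(`λ_{j,n} = λ_{k,n} ∉ {0,π}` or `λ_{j,n} ≠ λ_{k,n}`),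
`|S3(λ_{j,n},λ_{k,n})| ≤ C/n²`. -/
theorem S3_approx (γ1 γ2 : ℤ → ℂ)
    (h1 : Summable fun h : ℤ => (1 + |h| : ℝ) * ‖γ1 h‖)
    (h2 : Summable fun h : ℤ => (1 + |h| : ℝ) * ‖γ2 h‖) :
    ∃ C > (0 : ℝ), ∀ n : ℕ, 0 < n → ∀ j k : ℕ, 2 * j ≤ n → 2 * k ≤ n →
      ((j = k ∧ (j = 0 ∨ 2 * j = n)) →
        ‖S3sum γ1 γ2 n (2 * π * j / n) (2 * π * k / n) -
            specDens γ1 (2 * π * j / n) * specDens γ2 (2 * π * j / n)‖ ≤ C / n) ∧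
      (¬ (j = k ∧ (j = 0 ∨ 2 * j = n)) →
        ‖S3sum γ1 γ2 n (2 * π * j / n) (2 * π * k / n)‖ ≤ C / (n : ℝ) ^ 2) := by
  set C1 := ∑' h : ℤ, (1 + |h| : ℝ) * ‖γ1 h‖ with hC1def
  set C2 := ∑' h : ℤ, (1 + |h| : ℝ) * ‖γ2 h‖ with hC2def
  have hC1nn : 0 ≤ C1 := tsum_weight_nonneg γ1
  have hC2nn : 0 ≤ C2 := tsum_weight_nonneg γ2
  refine ⟨(C1+1)*(C2+1), by nlinarith, ?_⟩
  intro n hn j k hj hk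
  have hnR : (0:ℝ) < n := by exact_mod_cast hn
  have hnC : ((n:ℕ):ℂ) ≠ 0 := by exact_mod_cast hnR.ne'
  have hπ := Real.pi_pos
  have hπC : ((π:ℝ):ℂ) ≠ 0 := by exact_mod_cast Real.pi_ne_zero
  constructor
  · -- case (a)
    rintro ⟨hjk, hj0⟩
    subst hjk
    set l : ℝ := 2 * π * (j:ℝ) / n with hldef
    have hl0 : l = 0 ∨ l = π := by
      rcases hj0 with h0 | h2j
      · left; rw [hldef, h0]; simp
      · right
        have hj1 : 0 < j := by omega
        have hne : (j:ℝ) ≠ 0 := by exact_mod_cast hj1.ne'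
        have hn2 : (n:ℝ) = 2*(j:ℝ) := by exact_mod_cast h2j.symm
        rw [hldef, hn2]
        field_simp
    have hz1 : Complex.exp (Complex.I * (((-l:ℝ):ℂ) + ((-l:ℝ):ℂ))) = 1 := by
      rcases hl0 with h | h <;> rw [h]
      · simp
      · have : Complex.I * (((-π:ℝ):ℂ) + ((-π:ℝ):ℂ)) = ((-1:ℤ):ℂ) * (2*((π:ℝ):ℂ)*Complex.I) := by
          push_cast; ring
        rw [this, Complex.exp_int_mul_two_pi_mul_I]
    have hz2 : Complex.exp (Complex.I * ((l:ℂ) + (l:ℂ))) = 1 := by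
      rcases hl0 with h | h <;> rw [h]
      · simp
      · have : Complex.I * (((π:ℝ):ℂ) + ((π:ℝ):ℂ)) = ((1:ℤ):ℂ) * (2*((π:ℝ):ℂ)*Complex.I) := by
          push_cast; ring
        rw [this, Complex.exp_int_mul_two_pi_mul_I]
    have he : ∀ h : ℤ, ‖Complex.exp (-Complex.I * (h:ℂ) * (l:ℂ))‖ = 1 := by
      intro h
      refine norm_exp_I_real _ ⟨-((h:ℝ)*l), ?_⟩
      push_cast; ring
    have hA1 : Asum γ1 n (-l) (-l) = ∑ h ∈ Icc (1-(n:ℤ)) ((n:ℤ)-1),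
        γ1 h * Complex.exp (-Complex.I * (h:ℂ) * (l:ℂ)) * (cnt n h : ℂ) := by
      rw [Asum_case1 γ1 n (-l) (-l) hz1]
      refine Finset.sum_congr rfl fun h _ => ?_
      have hee : Complex.exp (Complex.I * ((-l:ℝ):ℂ) * (h:ℂ))
          = Complex.exp (-Complex.I * (h:ℂ) * (l:ℂ)) := by
        congr 1; push_cast; ring
      rw [hee]
    have hA2 : Asum γ2 n l l = ∑ h ∈ Icc (1-(n:ℤ)) ((n:ℤ)-1),
        γ2 h * Complex.exp (-Complex.I * (h:ℂ) * (l:ℂ)) * (cnt n h : ℂ) := by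
      rw [Asum_case1 γ2 n l l hz2]
      refine Finset.sum_congr rfl fun h _ => ?_
      have hee : Complex.exp (Complex.I * (l:ℂ) * (h:ℂ))
          = Complex.exp (-Complex.I * (h:ℂ) * (l:ℂ)) := by
        rcases hl0 with h0 | hpi
        · rw [h0]; push_cast; ring_nf
        · rw [hpi]
          have hrw : Complex.I * ((π:ℝ):ℂ) * (h:ℂ)
              = -Complex.I * (h:ℂ) * ((π:ℝ):ℂ) + (h:ℂ) * (2*((π:ℝ):ℂ)*Complex.I) := by ring
          rw [hrw, Complex.exp_add, Complex.exp_int_mul_two_pi_mul_I, mul_one]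
      rw [hee]
    set S1 := ∑ h ∈ Icc (1-(n:ℤ)) ((n:ℤ)-1),
        γ1 h * Complex.exp (-Complex.I * (h:ℂ) * (l:ℂ)) * (cnt n h : ℂ) with hS1def
    set S2 := ∑ h ∈ Icc (1-(n:ℤ)) ((n:ℤ)-1),
        γ2 h * Complex.exp (-Complex.I * (h:ℂ) * (l:ℂ)) * (cnt n h : ℂ) with hS2def
    set F1 := ∑' h : ℤ, γ1 h * Complex.exp (-Complex.I * (h:ℂ) * (l:ℂ)) with hF1def
    set F2 := ∑' h : ℤ, γ2 h * Complex.exp (-Complex.I * (h:ℂ) * (l:ℂ)) with hF2def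
    have key1 : ‖S1/n - F1‖ ≤ C1/n := keyA γ1 h1 _ he n hn
    have key2 : ‖S2/n - F2‖ ≤ C2/n := keyA γ2 h2 _ he n hn
    have b1 : ‖S1/(n:ℂ)‖ ≤ C1 := boundFin γ1 h1 _ he n hn
    have bF2 : ‖F2‖ ≤ C2 := boundTsum γ2 h2 _ he
    have halg : S3sum γ1 γ2 n l l - specDens γ1 l * specDens γ2 l
        = (((1:ℝ)/(4*π^2) : ℝ):ℂ) * ((S1/n) * (S2/n) - F1 * F2) := by
      rw [S3_factor, hA1, hA2]
      unfold specDens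
      rw [← hF1def, ← hF2def]
      push_cast
      ring
    rw [halg, norm_mul, Complex.norm_real, Real.norm_eq_abs, abs_of_pos (by positivity)]
    have hsplit : (S1/(n:ℂ))*(S2/(n:ℂ)) - F1*F2
        = (S1/(n:ℂ))*((S2/(n:ℂ)) - F2) + ((S1/(n:ℂ)) - F1)*F2 := by ring
    calc (1/(4*π^2)) * ‖(S1/(n:ℂ))*(S2/(n:ℂ)) - F1*F2‖
        ≤ (1/(4*π^2)) * (C1*(C2/(n:ℝ)) + (C1/(n:ℝ))*C2) := by
          refine mul_le_mul_of_nonneg_left ?_ (by positivity)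
          rw [hsplit]
          calc ‖(S1/(n:ℂ))*((S2/(n:ℂ)) - F2) + ((S1/(n:ℂ)) - F1)*F2‖
              ≤ ‖(S1/(n:ℂ))*((S2/(n:ℂ)) - F2)‖ + ‖((S1/(n:ℂ)) - F1)*F2‖ := norm_add_le _ _
            _ ≤ C1*(C2/(n:ℝ)) + (C1/(n:ℝ))*C2 := by
                rw [norm_mul, norm_mul]
                exact add_le_add
                  (mul_le_mul b1 key2 (norm_nonneg _) hC1nn)
                  (mul_le_mul key1 bF2 (norm_nonneg _) (by positivity))
      _ ≤ (C1+1)*(C2+1)/(n:ℝ) := by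
          have hexpand : (1/(4*π^2)) * (C1*(C2/(n:ℝ)) + (C1/(n:ℝ))*C2)
              = (C1*C2/(2*π^2))/(n:ℝ) := by field_simp; ring
          rw [hexpand]
          refine div_le_div_of_nonneg_right ?_ hnR.le
          have hd : C1*C2/(2*π^2) ≤ C1*C2 :=
            div_le_self (mul_nonneg hC1nn hC2nn) (by nlinarith [Real.pi_gt_three])
          nlinarith
  · -- case (b)
    intro hcase
    have hjk1 : 0 < j + k := by omega
    have hjk2 : j + k < n := by omega
    set l : ℝ := 2 * π * (j:ℝ) / n with hldef
    set μ : ℝ := 2 * π * (k:ℝ) / n with hμdef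
    have hr1 : (0:ℤ) < ((j+k : ℕ):ℤ) := by exact_mod_cast hjk1
    have hr2 : ((j+k : ℕ):ℤ) < (n:ℤ) := by exact_mod_cast hjk2
    -- the two unit roots
    have hθ2 : (n:ℝ) * (l + μ) = 2 * π * (((j+k : ℕ):ℤ) : ℝ) := by
      rw [hldef, hμdef]; push_cast; field_simp
    have hθ1 : (n:ℝ) * (-l + -μ) = 2 * π * ((-((j+k : ℕ):ℤ) : ℤ) : ℝ) := by
      rw [hldef, hμdef]; push_cast; field_simp; ring
    have hm1 : ∀ m : ℤ, -((j+k : ℕ):ℤ) ≠ m * n := by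
      intro m heq
      refine no_multiple ((j+k : ℕ):ℤ) n hr1 hr2 (-m) ?_
      linear_combination -heq
    have hm2 : ∀ m : ℤ, ((j+k : ℕ):ℤ) ≠ m * n := no_multiple _ _ hr1 hr2
    have hz1ne := exp_ne_one_of (-l + -μ) n _ hθ1 hm1
    have hz1pow := exp_pow_eq_one (-l + -μ) n _ hθ1
    have hz2ne := exp_ne_one_of (l + μ) n _ hθ2 hm2
    have hz2pow := exp_pow_eq_one (l + μ) n _ hθ2
    have hznorm1 : ‖Complex.exp (Complex.I * ((-l + -μ : ℝ):ℂ))‖ = 1 :=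
      norm_exp_I_real _ ⟨_, rfl⟩
    have hznorm2 : ‖Complex.exp (Complex.I * ((l + μ : ℝ):ℂ))‖ = 1 :=
      norm_exp_I_real _ ⟨_, rfl⟩
    have he1 : ∀ h : ℤ, ‖Complex.exp (Complex.I * ((-l:ℝ):ℂ) * (h:ℂ))‖ = 1 := by
      intro h
      refine norm_exp_I_real _ ⟨(-l)*(h:ℝ), ?_⟩
      push_cast; ring
    have he2 : ∀ h : ℤ, ‖Complex.exp (Complex.I * (l:ℂ) * (h:ℂ))‖ = 1 := by
      intro h
      refine norm_exp_I_real _ ⟨l*(h:ℝ), ?_⟩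
      push_cast; ring
    have hA1 : ‖Asum γ1 n (-l) (-μ)‖ ≤ C1 := by
      rw [Asum_eq]
      have hzc : (((-l:ℝ)):ℂ) + (((-μ:ℝ)):ℂ) = ((-l + -μ : ℝ):ℂ) := by push_cast; ring
      rw [hzc]
      exact keyB γ1 h1 _ he1 n _
        (fun h => Dbound _ hz1ne n hz1pow hznorm1 h)
    have hA2 : ‖Asum γ2 n l μ‖ ≤ C2 := by
      rw [Asum_eq]
      have hzc : ((l:ℝ):ℂ) + ((μ:ℝ):ℂ) = ((l + μ : ℝ):ℂ) := by push_cast; ring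
      rw [hzc]
      exact keyB γ2 h2 _ he2 n _
        (fun h => Dbound _ hz2ne n hz2pow hznorm2 h)
    rw [S3_factor]
    have hcoef : (1/(4*((π:ℝ):ℂ)^2*((n:ℕ):ℂ)^2)) = (((1/(4*π^2*(n:ℝ)^2)) : ℝ):ℂ) := by
      push_cast; ring
    have hnorm_coef : ‖(1/(4*((π:ℝ):ℂ)^2*((n:ℕ):ℂ)^2))‖ = 1/(4*π^2*(n:ℝ)^2) := by
      rw [hcoef, Complex.norm_real, Real.norm_eq_abs, abs_of_pos (by positivity)]
    rw [norm_mul, norm_mul, hnorm_coef]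
    have hb : ‖Asum γ1 n (-l) (-μ)‖ * ‖Asum γ2 n l μ‖ ≤ C1*C2 :=
      mul_le_mul hA1 hA2 (norm_nonneg _) hC1nn
    have hstep : (1/(4*π^2*(n:ℝ)^2)) * (‖Asum γ1 n (-l) (-μ)‖ * ‖Asum γ2 n l μ‖)
        ≤ (1/(4*π^2*(n:ℝ)^2)) * (C1*C2) :=
      mul_le_mul_of_nonneg_left hb (by positivity)
    refine hstep.trans ?_
    have hexpand : (1/(4*π^2*(n:ℝ)^2)) * (C1*C2) = (C1*C2/(4*π^2))/(n:ℝ)^2 := by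
      field_simp
    rw [hexpand]
    refine div_le_div_of_nonneg_right ?_ (by positivity)
    have hd : C1*C2/(4*π^2) ≤ C1*C2 :=
      div_le_self (mul_nonneg hC1nn hC2nn) (by nlinarith [Real.pi_gt_three])
    nlinarith
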